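/- (Kesten's theorem on bounded remainder, sufficiency direction) Let x be irrational and suppose b − a = {jx} for some positive integer j, with 0 ≤ a < b ≤ 1 and b − a < 1. Then the discrepancy Sₙ(x) − n(b − a) is bounded in n, where Sₙ(x) = #{k ∈ {1,…,n} : {kx} ∈ [a, b)}. -/

import Mathlib

open Filter Topology

private lemma fract_shift_one (r : ℝ) (h0 : 0 ≤ r + 1) (h1 : r + 1 < 1) :
    Int.fract r = r + 1 := by
  have h2 : Int.fract (r + 1) = r + 1 := Int.fract_eq_self.mpr ⟨h0, h1⟩
  have h3 : Int.fract (r + 1) = Int.fract r := by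
    rw [show r + 1 = r + ((1 : ℤ) : ℝ) by push_cast; ring]
    exact Int.fract_add_intCast _ _
  linarith

private lemma fract_key_aux (a b : ℝ) (ha : 0 ≤ a) (hab : a < b) (hb : b ≤ 1) (t : ℝ) :
    (if a ≤ Int.fract t ∧ Int.fract t < b then (1:ℝ) else 0) - (b - a)
      = Int.fract (t - b) - Int.fract (t - a) := by
  have hu0 := Int.fract_nonneg t
  have hu1 := Int.fract_lt_one t
  set u := Int.fract t with hu
  have hut : u = t - (⌊t⌋ : ℤ) := rfl
  have ha' : Int.fract (t - a) = Int.fract (u - a) := by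
    rw [show t - a = u - a + (⌊t⌋ : ℤ) by rw [hut]; ring, Int.fract_add_intCast]
  have hb' : Int.fract (t - b) = Int.fract (u - b) := by
    rw [show t - b = u - b + (⌊t⌋ : ℤ) by rw [hut]; ring, Int.fract_add_intCast]
  rw [ha', hb']
  by_cases h1 : a ≤ u
  · by_cases h2 : u < b
    · have e1 : Int.fract (u - a) = u - a :=
        Int.fract_eq_self.mpr ⟨by linarith, by linarith⟩
      have e2 : Int.fract (u - b) = u - b + 1 :=
        fract_shift_one _ (by linarith) (by linarith)
      rw [e1, e2, if_pos ⟨h1, h2⟩]; ring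
    · have e1 : Int.fract (u - a) = u - a :=
        Int.fract_eq_self.mpr ⟨by linarith, by linarith⟩
      have e2 : Int.fract (u - b) = u - b :=
        Int.fract_eq_self.mpr ⟨by linarith, by linarith⟩
      rw [e1, e2, if_neg (by tauto)]; ring
  · push_neg at h1
    have e1 : Int.fract (u - a) = u - a + 1 :=
      fract_shift_one _ (by linarith) (by linarith)
    have e2 : Int.fract (u - b) = u - b + 1 :=
      fract_shift_one _ (by linarith) (by linarith)
    rw [e1, e2, if_neg (by push_neg; intro h; linarith)]; ring

/-- **Kesten's bounded remainder theorem (sufficiency direction).** Let `x` be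
irrational, `0 ≤ a < b ≤ 1` with `b − a < 1`, and suppose `b − a = {jx}` for
some positive integer `j`. Then the discrepancy `Sₙ(x) − n(b − a)` is bounded
in `n`, where `Sₙ(x) = #{k ∈ {1,…,n} : {kx} ∈ [a, b)}`. -/
theorem kesten_bounded_remainder (x : ℝ) (hx : Irrational x)
    (a b : ℝ) (ha : 0 ≤ a) (hab : a < b) (hb : b ≤ 1) (hlen : b - a < 1)
    (j : ℕ) (hj : 0 < j) (hba : b - a = Int.fract ((j : ℝ) * x)) :
    ∃ C : ℝ, ∀ n : ℕ,
      |(((Finset.Icc 1 n).filter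
            (fun k : ℕ => a ≤ Int.fract ((k : ℝ) * x) ∧ Int.fract ((k : ℝ) * x) < b)).card : ℝ)
          - (n : ℝ) * (b - a)| ≤ C := by
  refine ⟨2 * j, fun n => ?_⟩
  -- F m = {m x − a}
  have hfr : b - a = (j : ℝ) * x - (⌊(j : ℝ) * x⌋ : ℤ) := by
    rw [hba]; rfl
  set F : ℤ → ℝ := fun m => Int.fract ((m : ℝ) * x - a) with hF
  set A : Finset ℤ := Finset.Icc (1 - (j : ℤ)) ((n : ℤ) - j) with hA
  set B : Finset ℤ := Finset.Icc (1 : ℤ) (n : ℤ) with hB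
  -- the pointwise identity
  have hpt : ∀ k : ℕ,
      (if a ≤ Int.fract ((k : ℝ) * x) ∧ Int.fract ((k : ℝ) * x) < b then (1:ℝ) else 0)
        - (b - a) = F ((k : ℤ) - j) - F (k : ℤ) := by
    intro k
    have h1 := fract_key_aux a b ha hab hb ((k : ℝ) * x)
    have h2 : Int.fract ((k : ℝ) * x - b) = F ((k : ℤ) - j) := by
      have hkey : (k : ℝ) * x - b
          = ((((k : ℤ) - j : ℤ)) : ℝ) * x - a + (⌊(j : ℝ) * x⌋ : ℤ) := by
        push_cast
        linear_combination -hfr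
      rw [hkey, Int.fract_add_intCast, hF]
    have h3 : Int.fract ((k : ℝ) * x - a) = F (k : ℤ) := by
      rw [hF]; push_cast; ring_nf
    rw [h1, h2, h3]
  -- the sum identity
  have hcard : (((Finset.Icc 1 n).filter
            (fun k : ℕ => a ≤ Int.fract ((k : ℝ) * x) ∧ Int.fract ((k : ℝ) * x) < b)).card : ℝ)
          - (n : ℝ) * (b - a)
      = (∑ m ∈ A, F m) - (∑ m ∈ B, F m) := by
    have c1 : (((Finset.Icc 1 n).filter
            (fun k : ℕ => a ≤ Int.fract ((k : ℝ) * x) ∧ Int.fract ((k : ℝ) * x) < b)).card : ℝ)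
        = ∑ k ∈ Finset.Icc 1 n,
            (if a ≤ Int.fract ((k : ℝ) * x) ∧ Int.fract ((k : ℝ) * x) < b then (1:ℝ) else 0) := by
      rw [Finset.card_filter]
      push_cast
      rfl
    have c2 : (n : ℝ) * (b - a) = ∑ _k ∈ Finset.Icc 1 n, (b - a) := by
      rw [Finset.sum_const, Nat.card_Icc, nsmul_eq_mul]
      norm_num [mul_comm]
    rw [c1, c2, ← Finset.sum_sub_distrib]
    rw [Finset.sum_congr rfl (fun k _ => hpt k)]
    rw [Finset.sum_sub_distrib]
    congr 1
    · -- ∑ k in Icc 1 n (ℕ), F (k − j) = ∑ m in A, F m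
      refine Finset.sum_nbij' (i := fun k => (k : ℤ) - j) (j := fun m => (m + j).toNat)
        ?_ ?_ ?_ ?_ ?_
      · intro k hk
        simp only [hA, Finset.mem_Icc] at hk ⊢
        omega
      · intro m hm
        simp only [hA, Finset.mem_Icc] at hm ⊢
        omega
      · intro k hk
        simp only [Finset.mem_Icc] at hk
        omega
      · intro m hm
        simp only [hA, Finset.mem_Icc] at hm
        omega
      · intro k hk
        rfl
    · refine Finset.sum_nbij' (i := fun k => (k : ℤ)) (j := fun m => m.toNat)
        ?_ ?_ ?_ ?_ ?_
      · intro k hk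
        simp only [hB, Finset.mem_Icc] at hk ⊢
        omega
      · intro m hm
        simp only [hB, Finset.mem_Icc] at hm ⊢
        omega
      · intro k hk
        simp only [Finset.mem_Icc] at hk
        omega
      · intro m hm
        simp only [hB, Finset.mem_Icc] at hm
        omega
      · intro k hk
        rfl
  rw [hcard]
  -- now bound |∑_A F − ∑_B F| ≤ 2 j
  have hsplit : (∑ m ∈ A, F m) - (∑ m ∈ B, F m)
      = (∑ m ∈ A \ B, F m) - (∑ m ∈ B \ A, F m) := by
    have e1 : ∑ m ∈ A ∩ B, F m + ∑ m ∈ A \ B, F m = ∑ m ∈ A, F m :=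
      Finset.sum_inter_add_sum_sdiff A B F
    have e2 : ∑ m ∈ B ∩ A, F m + ∑ m ∈ B \ A, F m = ∑ m ∈ B, F m :=
      Finset.sum_inter_add_sum_sdiff B A F
    rw [Finset.inter_comm] at e2
    linarith
  have hFnonneg : ∀ m : ℤ, 0 ≤ F m := fun m => Int.fract_nonneg _
  have hFle : ∀ m : ℤ, F m ≤ 1 := fun m => (Int.fract_lt_one _).le
  have hbound : ∀ s : Finset ℤ, ∑ m ∈ s, F m ≤ (s.card : ℝ) := by
    intro s
    calc ∑ m ∈ s, F m ≤ ∑ _m ∈ s, (1:ℝ) := Finset.sum_le_sum fun m _ => hFle m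
    _ = (s.card : ℝ) := by simp
  have hcardAB : ((A \ B).card : ℝ) ≤ (j : ℝ) := by
    have hsub : A \ B ⊆ Finset.Icc (1 - (j : ℤ)) 0 := by
      intro m hm
      simp only [hA, hB, Finset.mem_sdiff, Finset.mem_Icc] at hm ⊢
      omega
    have hle := Finset.card_le_card hsub
    have hc : (Finset.Icc (1 - (j : ℤ)) 0).card = j := by
      rw [Int.card_Icc]; omega
    rw [hc] at hle
    exact_mod_cast hle
  have hcardBA : ((B \ A).card : ℝ) ≤ (j : ℝ) := by
    have hsub : B \ A ⊆ Finset.Icc ((n : ℤ) - j + 1) (n : ℤ) := by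
      intro m hm
      simp only [hA, hB, Finset.mem_sdiff, Finset.mem_Icc] at hm ⊢
      omega
    have hle := Finset.card_le_card hsub
    have hc : (Finset.Icc ((n : ℤ) - j + 1) (n : ℤ)).card = j := by
      rw [Int.card_Icc]; omega
    rw [hc] at hle
    exact_mod_cast hle
  rw [hsplit]
  have h1 : ∑ m ∈ A \ B, F m ≤ (j : ℝ) := le_trans (hbound _) hcardAB
  have h2 : ∑ m ∈ B \ A, F m ≤ (j : ℝ) := le_trans (hbound _) hcardBA
  have h3 : 0 ≤ ∑ m ∈ A \ B, F m := Finset.sum_nonneg fun m _ => hFnonneg m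
  have h4 : 0 ≤ ∑ m ∈ B \ A, F m := Finset.sum_nonneg fun m _ => hFnonneg m
  rw [abs_le]
  constructor <;> linarith
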